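/- arXiv:1907.05094 — 2 statements merged into one kernel-verified Lean document; each statement's English description precedes it below -/
import Mathlib

section
/- Let A, B, C be three pairwise disjoint finite point sets in R^d with |A| ≤ |B|. Then Δ(A∪B∪C) ≤ Δ(A) + 3·Δ(B∪C) + 4·D(A,B). -/
open Finset
open scoped Classical
open RealInnerProductSpace

noncomputable def centroid {d : ℕ} (P : Finset (EuclideanSpace ℝ (Fin d))) :
    EuclideanSpace ℝ (Fin d) :=
  (P.card : ℝ)⁻¹ • ∑ p ∈ P, p

noncomputable def Delta {d : ℕ} (P : Finset (EuclideanSpace ℝ (Fin d))) : ℝ :=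
  ∑ p ∈ P, ‖p - centroid P‖ ^ 2

noncomputable def mergeD {d : ℕ} (A B : Finset (EuclideanSpace ℝ (Fin d))) : ℝ :=
  Delta (A ∪ B) - Delta A - Delta B

section aux

variable {d : ℕ}

lemma Delta_nonneg (P : Finset (EuclideanSpace ℝ (Fin d))) : 0 ≤ Delta P := by
  unfold Delta; positivity

lemma card_smul_centroid (P : Finset (EuclideanSpace ℝ (Fin d))) (hP : P.Nonempty) :
    (P.card : ℝ) • _root_.centroid P = ∑ p ∈ P, p := by
  have h : (P.card : ℝ) ≠ 0 := Nat.cast_ne_zero.mpr (Finset.card_ne_zero_of_mem hP.choose_spec)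
  unfold _root_.centroid
  rw [smul_smul, mul_inv_cancel₀ h, one_smul]

lemma spread (P : Finset (EuclideanSpace ℝ (Fin d))) (hP : P.Nonempty)
    (x : EuclideanSpace ℝ (Fin d)) :
    ∑ p ∈ P, ‖p - x‖ ^ 2 = Delta P + (P.card : ℝ) * ‖_root_.centroid P - x‖ ^ 2 := by
  have hid : ∀ p : EuclideanSpace ℝ (Fin d),
      ‖p - x‖ ^ 2 = ‖p - _root_.centroid P‖ ^ 2
        + (2 * ⟪p - _root_.centroid P, _root_.centroid P - x⟫ + ‖_root_.centroid P - x‖ ^ 2) := by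
    intro p
    have h := norm_add_sq_real (p - _root_.centroid P) (_root_.centroid P - x)
    have he : p - _root_.centroid P + (_root_.centroid P - x) = p - x := by abel
    rw [he] at h
    linarith
  rw [Finset.sum_congr rfl fun p _ => hid p, Finset.sum_add_distrib, Finset.sum_add_distrib]
  have hsum0 : ∑ p ∈ P, (p - _root_.centroid P) = 0 := by
    rw [Finset.sum_sub_distrib, sub_eq_zero, Finset.sum_const,
      ← Nat.cast_smul_eq_nsmul ℝ, card_smul_centroid P hP]
  have hinner : ∑ p ∈ P, 2 * ⟪p - _root_.centroid P, _root_.centroid P - x⟫ = 0 := by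
    rw [← Finset.mul_sum, ← sum_inner, hsum0, inner_zero_left, mul_zero]
  rw [hinner, Finset.sum_const, nsmul_eq_mul]
  unfold Delta
  ring


lemma le_Delta_of_subset (B S : Finset (EuclideanSpace ℝ (Fin d))) (hBS : B ⊆ S)
    (hB : B.Nonempty) :
    (B.card : ℝ) * ‖_root_.centroid B - _root_.centroid S‖ ^ 2 ≤ Delta S := by
  have h1 := spread B hB (_root_.centroid S)
  have h2 : ∑ p ∈ B, ‖p - _root_.centroid S‖ ^ 2 ≤ ∑ p ∈ S, ‖p - _root_.centroid S‖ ^ 2 :=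
    Finset.sum_le_sum_of_subset_of_nonneg hBS (fun p _ _ => by positivity)
  have h3 : 0 ≤ Delta B := Delta_nonneg B
  have h4 : Delta S = ∑ p ∈ S, ‖p - _root_.centroid S‖ ^ 2 := rfl
  linarith

lemma mergeD_eq (X Y : Finset (EuclideanSpace ℝ (Fin d))) (hXY : Disjoint X Y)
    (hX : X.Nonempty) (hY : Y.Nonempty) :
    mergeD X Y = ((X.card : ℝ) * Y.card / (X.card + Y.card)) *
      ‖_root_.centroid X - _root_.centroid Y‖ ^ 2 := by
  set x : ℝ := (X.card : ℝ) with hxdef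
  set y : ℝ := (Y.card : ℝ) with hydef
  have hx : 0 < x := by rw [hxdef]; exact_mod_cast hX.card_pos
  have hy : 0 < y := by rw [hydef]; exact_mod_cast hY.card_pos
  have hxy : x + y ≠ 0 := by positivity
  set μ := _root_.centroid (X ∪ Y) with hμ
  have hcardU : ((X ∪ Y).card : ℝ) = x + y := by
    rw [Finset.card_union_of_disjoint hXY]; push_cast; ring
  have hsumU : (x + y) • μ = x • _root_.centroid X + y • _root_.centroid Y := by
    have hU : (X ∪ Y).Nonempty := ⟨hX.choose, Finset.mem_union_left _ hX.choose_spec⟩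
    rw [hμ, ← hcardU, card_smul_centroid _ hU, Finset.sum_union hXY,
      ← card_smul_centroid X hX, ← card_smul_centroid Y hY]
  have hXμ : _root_.centroid X - μ = (y / (x + y)) • (_root_.centroid X - _root_.centroid Y) := by
    have : (x + y) • (_root_.centroid X - μ) = y • (_root_.centroid X - _root_.centroid Y) := by
      rw [smul_sub, hsumU]; module
    calc _root_.centroid X - μ = ((x+y)⁻¹ * (x+y)) • (_root_.centroid X - μ) := by
          rw [inv_mul_cancel₀ hxy, one_smul]
      _ = (x+y)⁻¹ • ((x + y) • (_root_.centroid X - μ)) := by rw [smul_smul]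
      _ = (x+y)⁻¹ • (y • (_root_.centroid X - _root_.centroid Y)) := by rw [this]
      _ = (y / (x + y)) • (_root_.centroid X - _root_.centroid Y) := by
          rw [smul_smul]; congr 1; field_simp
  have hYμ : _root_.centroid Y - μ = (x / (x + y)) • (_root_.centroid Y - _root_.centroid X) := by
    have : (x + y) • (_root_.centroid Y - μ) = x • (_root_.centroid Y - _root_.centroid X) := by
      rw [smul_sub, hsumU]; module
    calc _root_.centroid Y - μ = ((x+y)⁻¹ * (x+y)) • (_root_.centroid Y - μ) := by
          rw [inv_mul_cancel₀ hxy, one_smul]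
      _ = (x+y)⁻¹ • ((x + y) • (_root_.centroid Y - μ)) := by rw [smul_smul]
      _ = (x+y)⁻¹ • (x • (_root_.centroid Y - _root_.centroid X)) := by rw [this]
      _ = (x / (x + y)) • (_root_.centroid Y - _root_.centroid X) := by
          rw [smul_smul]; congr 1; field_simp
  have hDU : Delta (X ∪ Y) = (Delta X + x * ‖_root_.centroid X - μ‖ ^ 2)
      + (Delta Y + y * ‖_root_.centroid Y - μ‖ ^ 2) := by
    have : Delta (X ∪ Y) = ∑ p ∈ X, ‖p - μ‖ ^ 2 + ∑ p ∈ Y, ‖p - μ‖ ^ 2 := by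
      unfold Delta; rw [← hμ, Finset.sum_union hXY]
    rw [this, spread X hX μ, spread Y hY μ]
  have hnX : ‖_root_.centroid X - μ‖ ^ 2
      = (y / (x+y)) ^ 2 * ‖_root_.centroid X - _root_.centroid Y‖ ^ 2 := by
    rw [hXμ, norm_smul, Real.norm_eq_abs, mul_pow, sq_abs]
  have hnY : ‖_root_.centroid Y - μ‖ ^ 2
      = (x / (x+y)) ^ 2 * ‖_root_.centroid X - _root_.centroid Y‖ ^ 2 := by
    rw [hYμ, norm_smul, Real.norm_eq_abs, mul_pow, sq_abs, norm_sub_rev]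
  have hcoef : x * (y / (x+y)) ^ 2 + y * (x / (x+y)) ^ 2 = x * y / (x + y) := by
    field_simp; ring
  unfold mergeD
  rw [hDU, hnX, hnY]
  nlinarith [hcoef, sq_nonneg (‖_root_.centroid X - _root_.centroid Y‖)]

end aux

theorem delta_union_three_bound {d : ℕ} (A B C : Finset (EuclideanSpace ℝ (Fin d)))
    (hAB : Disjoint A B) (hAC : Disjoint A C) (hBC : Disjoint B C)
    (hcard : A.card ≤ B.card) :
    Delta (A ∪ B ∪ C) ≤ Delta A + 3 * Delta (B ∪ C) + 4 * mergeD A B := by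
  rcases A.eq_empty_or_nonempty with hA | hA
  · subst hA
    have hm : mergeD (∅ : Finset (EuclideanSpace ℝ (Fin d))) B = 0 := by
      unfold mergeD
      rw [Finset.empty_union]
      have : Delta (∅ : Finset (EuclideanSpace ℝ (Fin d))) = 0 := rfl
      rw [this]; ring
    rw [Finset.empty_union, hm]
    have h0 : Delta (∅ : Finset (EuclideanSpace ℝ (Fin d))) = 0 := rfl
    rw [h0]
    have := Delta_nonneg (B ∪ C)
    linarith
  rcases B.eq_empty_or_nonempty with hB | hB
  · exfalso
    have h := hA.card_pos
    rw [hB, Finset.card_empty, Nat.le_zero] at hcard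
    omega
  have hS : (B ∪ C).Nonempty := ⟨hB.choose, Finset.mem_union_left _ hB.choose_spec⟩
  have hAS : Disjoint A (B ∪ C) := Finset.disjoint_union_right.mpr ⟨hAB, hAC⟩
  have hU : A ∪ B ∪ C = A ∪ (B ∪ C) := Finset.union_assoc A B C
  rw [hU]
  have key : Delta (A ∪ (B ∪ C)) = Delta A + Delta (B ∪ C) + mergeD A (B ∪ C) := by
    unfold mergeD; ring
  rw [key]
  have e1 := mergeD_eq A (B ∪ C) hAS hA hS
  have e2 := mergeD_eq A B hAB hA hB
  set a : ℝ := (A.card : ℝ) with hadef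
  set b : ℝ := (B.card : ℝ) with hbdef
  set s : ℝ := ((B ∪ C).card : ℝ) with hsdef
  have ha : 0 < a := by rw [hadef]; exact_mod_cast hA.card_pos
  have hb : 0 < b := by rw [hbdef]; exact_mod_cast hB.card_pos
  have hab : a ≤ b := by rw [hadef, hbdef]; exact_mod_cast hcard
  have hbs : b ≤ s := by
    rw [hbdef, hsdef]; exact_mod_cast Finset.card_le_card Finset.subset_union_left
  set M : ℝ := ‖_root_.centroid A - _root_.centroid (B ∪ C)‖ ^ 2 with hMdef
  set P : ℝ := ‖_root_.centroid A - _root_.centroid B‖ ^ 2 with hPdef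
  set Q : ℝ := ‖_root_.centroid B - _root_.centroid (B ∪ C)‖ ^ 2 with hQdef
  have hPn : 0 ≤ P := by positivity
  have hQn : 0 ≤ Q := by positivity
  have hMn : 0 ≤ M := by positivity
  have htri : ‖_root_.centroid A - _root_.centroid (B ∪ C)‖
      ≤ ‖_root_.centroid A - _root_.centroid B‖
        + ‖_root_.centroid B - _root_.centroid (B ∪ C)‖ :=
    norm_sub_le_norm_sub_add_norm_sub _ _ _
  have hM : M ≤ 2 * P + 2 * Q := by
    rw [hMdef, hPdef, hQdef]
    nlinarith [htri, norm_nonneg (_root_.centroid A - _root_.centroid (B ∪ C)),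
      norm_nonneg (_root_.centroid A - _root_.centroid B),
      norm_nonneg (_root_.centroid B - _root_.centroid (B ∪ C)),
      sq_nonneg (‖_root_.centroid A - _root_.centroid B‖
        - ‖_root_.centroid B - _root_.centroid (B ∪ C)‖)]
  have hQD : b * Q ≤ Delta (B ∪ C) := le_Delta_of_subset B (B ∪ C) Finset.subset_union_left hB
  have hDSn : 0 ≤ Delta (B ∪ C) := Delta_nonneg _
  rw [e1, e2]
  set k1 : ℝ := a * s / (a + s) with hk1def
  set k2 : ℝ := a * b / (a + b) with hk2def
  have hk1n : 0 ≤ k1 := by rw [hk1def]; positivity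
  have hk1a : k1 ≤ a := by
    rw [hk1def, div_le_iff₀ (by linarith : (0:ℝ) < a + s)]
    nlinarith
  have hk2a : a ≤ 2 * k2 := by
    rw [hk2def, show 2 * (a * b / (a + b)) = 2 * (a * b) / (a + b) by ring,
      le_div_iff₀ (by linarith : (0:ℝ) < a + b)]
    nlinarith
  have h1 : k1 * M ≤ k1 * (2 * P + 2 * Q) := by
    exact mul_le_mul_of_nonneg_left hM hk1n
  have h2 : k1 * (2 * P + 2 * Q) ≤ a * (2 * P + 2 * Q) :=
    mul_le_mul_of_nonneg_right hk1a (by linarith)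
  have h3 : a * P ≤ 2 * k2 * P := mul_le_mul_of_nonneg_right hk2a hPn
  have h4 : a * Q ≤ b * Q := mul_le_mul_of_nonneg_right hab hQn
  linarith [h1, h2, h3, h4, hQD, hDSn]
end

section
/- Let B' ⊆ B ⊂ R^d be finite nonempty sets and let A ⊂ R^d be a finite nonempty set disjoint from B, such that ‖μ(A)−μ(B')‖² ≤ ‖μ(A)−μ(B)‖². Then D(A,B') ≤ D(A,B). -/
open Finset
open scoped Classical

lemma sum_eq_card_smul_centroid {d : ℕ} (P : Finset (EuclideanSpace ℝ (Fin d)))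
    (hP : P.Nonempty) : ∑ p ∈ P, p = (P.card : ℝ) • centroid P := by
  have hc : (P.card : ℝ) ≠ 0 := by
    exact_mod_cast Nat.cast_ne_zero.mpr (Finset.card_ne_zero.mpr hP)
  rw [_root_.centroid, smul_smul, mul_inv_cancel₀ hc, one_smul]

lemma sum_sub_centroid {d : ℕ} (P : Finset (EuclideanSpace ℝ (Fin d)))
    (hP : P.Nonempty) : ∑ p ∈ P, (p - centroid P) = 0 := by
  rw [Finset.sum_sub_distrib, Finset.sum_const, sum_eq_card_smul_centroid P hP,
    ← Nat.cast_smul_eq_nsmul ℝ, sub_self]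

lemma parallel_axis {d : ℕ} (P : Finset (EuclideanSpace ℝ (Fin d)))
    (hP : P.Nonempty) (x : EuclideanSpace ℝ (Fin d)) :
    ∑ p ∈ P, ‖p - x‖ ^ 2 = Delta P + (P.card : ℝ) * ‖centroid P - x‖ ^ 2 := by
  have key : ∀ p : EuclideanSpace ℝ (Fin d), ‖p - x‖ ^ 2
      = ‖p - centroid P‖ ^ 2 + (2 * inner ℝ (p - centroid P) (centroid P - x) +
        ‖centroid P - x‖ ^ 2) := by
    intro p
    have h : p - x = (p - centroid P) + (centroid P - x) := by abel
    rw [h, @norm_add_sq_real]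
    ring
  rw [Finset.sum_congr rfl (fun p _ => key p), Finset.sum_add_distrib, Delta]
  congr 1
  rw [Finset.sum_add_distrib, ← Finset.mul_sum, ← sum_inner, sum_sub_centroid P hP,
    inner_zero_left, Finset.sum_const, nsmul_eq_mul]
  ring

lemma mergeD_eq_s9 {d : ℕ} (A B : Finset (EuclideanSpace ℝ (Fin d)))
    (hA : A.Nonempty) (hB : B.Nonempty) (hAB : Disjoint A B) :
    mergeD A B = (A.card : ℝ) * B.card / (A.card + B.card) *
      ‖centroid A - centroid B‖ ^ 2 := by
  have hcard : ((A ∪ B).card : ℝ) = A.card + B.card := by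
    rw [Finset.card_union_of_disjoint hAB]; push_cast; ring
  have ha : (0:ℝ) < A.card := by exact_mod_cast Finset.card_pos.mpr hA
  have hb : (0:ℝ) < B.card := by exact_mod_cast Finset.card_pos.mpr hB
  have hab : (0:ℝ) < (A.card : ℝ) + B.card := by linarith
  set μ := centroid (A ∪ B) with hμ
  set a := (A.card : ℝ)
  set b := (B.card : ℝ)
  -- Delta (A ∪ B) splits
  have hsplit : Delta (A ∪ B)
      = (Delta A + a * ‖centroid A - μ‖ ^ 2) + (Delta B + b * ‖centroid B - μ‖ ^ 2) := by
    rw [Delta, Finset.sum_union hAB, parallel_axis A hA μ, parallel_axis B hB μ]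
  -- express μ
  have hsum : (a + b) • μ = a • centroid A + b • centroid B := by
    have h1 := sum_eq_card_smul_centroid (A ∪ B) (hA.mono Finset.subset_union_left)
    rw [Finset.sum_union hAB, sum_eq_card_smul_centroid A hA,
      sum_eq_card_smul_centroid B hB, hcard] at h1
    exact h1.symm
  have hAμ : centroid A - μ = (b / (a + b)) • (centroid A - centroid B) := by
    have : (a + b) • (centroid A - μ) = b • (centroid A - centroid B) := by
      rw [smul_sub, hsum, smul_sub]; module
    have h := congrArg (fun v => (a + b)⁻¹ • v) this
    simpa [smul_smul, inv_mul_cancel₀ hab.ne', div_eq_inv_mul, mul_comm] using h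
  have hBμ : centroid B - μ = (a / (a + b)) • (centroid B - centroid A) := by
    have : (a + b) • (centroid B - μ) = a • (centroid B - centroid A) := by
      rw [smul_sub, hsum, smul_sub]; module
    have h := congrArg (fun v => (a + b)⁻¹ • v) this
    simpa [smul_smul, inv_mul_cancel₀ hab.ne', div_eq_inv_mul, mul_comm] using h
  have hnorm : ‖centroid B - centroid A‖ = ‖centroid A - centroid B‖ := norm_sub_rev _ _
  rw [mergeD, hsplit]
  rw [hAμ, hBμ, norm_smul, norm_smul, mul_pow, mul_pow, hnorm]
  have h1 : ‖b / (a + b)‖ = b / (a + b) := by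
    rw [Real.norm_eq_abs, abs_of_nonneg (by positivity)]
  have h2 : ‖a / (a + b)‖ = a / (a + b) := by
    rw [Real.norm_eq_abs, abs_of_nonneg (by positivity)]
  rw [h1, h2]
  field_simp
  ring

theorem mergeD_subcluster {d : ℕ} (A B B' : Finset (EuclideanSpace ℝ (Fin d)))
    (hB' : B'.Nonempty) (hB'B : B' ⊆ B) (hA : A.Nonempty) (hAB : Disjoint A B)
    (hcent : ‖centroid A - centroid B'‖ ^ 2 ≤ ‖centroid A - centroid B‖ ^ 2) :
    mergeD A B' ≤ mergeD A B := by
  have hB : B.Nonempty := hB'.mono hB'B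
  have hAB' : Disjoint A B' := hAB.mono_right hB'B
  rw [mergeD_eq_s9 A B hA hB hAB, mergeD_eq_s9 A B' hA hB' hAB']
  have ha : (0:ℝ) < A.card := by exact_mod_cast Finset.card_pos.mpr hA
  have hb : (0:ℝ) < B.card := by exact_mod_cast Finset.card_pos.mpr hB
  have hb' : (0:ℝ) < B'.card := by exact_mod_cast Finset.card_pos.mpr hB'
  have hle : (B'.card : ℝ) ≤ B.card := by exact_mod_cast Finset.card_le_card hB'B
  have hcoef : (A.card : ℝ) * B'.card / (A.card + B'.card)
      ≤ (A.card : ℝ) * B.card / (A.card + B.card) := by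
    rw [div_le_div_iff₀ (by linarith) (by linarith)]
    nlinarith [mul_le_mul_of_nonneg_left hle (mul_pos ha ha).le]
  have h0 : (0:ℝ) ≤ ‖centroid A - centroid B'‖ ^ 2 := by positivity
  have h0' : (0:ℝ) ≤ (A.card : ℝ) * B'.card / (A.card + B'.card) := by positivity
  exact mul_le_mul hcoef hcent h0 (by positivity)
end
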